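/- For every 1 ≤ s,t ≤ k and each degree d ≥ 0, the u^d-coefficient of a_{k,(s,t),ℓ}(u) is eventually constant as ℓ → ∞; denoting the limit power series by α_{k,(s,t)}(u) ∈ ℚ[[u]], for all s ≥ 2 one has: α_{k,(s,t)}(u) = qu²·α_{k,(s−1,t)}(u) if s ≠ t, and α_{k,(s,t)}(u) = −(q−1)u + qu²·α_{k,(s−1,t)}(u) if s = t. -/

import Mathlib

open Polynomial in
/-- `aP q k ℓ s t = a_{k,(s,t),ℓ}(u) ∈ ℚ[u]` (with the junk value `0` at `ℓ = 0`). -/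
noncomputable def aP (q k : ℕ) : ℕ → ℕ → ℕ → ℚ[X]
  | 0, _, _ => 0
  | 1, s, t =>
      if s = 1 ∧ t = 1 then -C ((q : ℚ) ^ 2 - 1) * X
      else if s = t then -C ((q : ℚ) - 1) * X
      else 0
  | ℓ + 2, s, t =>
      if s = 1 ∧ t = 1 then
        -C ((q : ℚ) ^ 2 - 1) * X +
          ∑ i ∈ Finset.Icc 1 k,
            C (((q : ℚ) - 1) * (q : ℚ) ^ (2 * i + 1)) * X ^ (i + 2) * aP q k (ℓ + 1) i 1
      else if s = 1 then
        -C (((q : ℚ) - 1) * (q : ℚ) ^ (2 * t - 1)) * X ^ t +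
          ∑ i ∈ Finset.Icc 1 k,
            C (((q : ℚ) - 1) * (q : ℚ) ^ (2 * i + 1)) * X ^ (i + 2) * aP q k (ℓ + 1) i t
      else if s = t then
        -C ((q : ℚ) - 1) * X + C (q : ℚ) * X ^ 2 * aP q k (ℓ + 1) (s - 1) t
      else C (q : ℚ) * X ^ 2 * aP q k (ℓ + 1) (s - 1) t

section Aux
open Polynomial

/-! ### Unfolding lemmas for `aP` -/

lemma aP_one_one (q k : ℕ) : aP q k 1 1 1 = -C ((q : ℚ) ^ 2 - 1) * X := by
  rw [aP]; rw [if_pos ⟨rfl, rfl⟩]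

lemma aP_one_eq (q k s t : ℕ) (hs1 : s ≠ 1) (hst : s = t) :
    aP q k 1 s t = -C ((q : ℚ) - 1) * X := by
  rw [aP]; rw [if_neg (fun h => hs1 h.1), if_pos hst]

lemma aP_one_ne (q k s t : ℕ) (hst : s ≠ t) : aP q k 1 s t = 0 := by
  rw [aP]; rw [if_neg (fun h => hst (h.1.trans h.2.symm)), if_neg hst]

lemma aP_step_one_one (q k ℓ : ℕ) :
    aP q k (ℓ + 2) 1 1 = -C ((q : ℚ) ^ 2 - 1) * X +
      ∑ i ∈ Finset.Icc 1 k,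
        C (((q : ℚ) - 1) * (q : ℚ) ^ (2 * i + 1)) * X ^ (i + 2) * aP q k (ℓ + 1) i 1 := by
  rw [aP]; rw [if_pos ⟨rfl, rfl⟩]

lemma aP_step_one (q k ℓ t : ℕ) (ht1 : t ≠ 1) :
    aP q k (ℓ + 2) 1 t = -C (((q : ℚ) - 1) * (q : ℚ) ^ (2 * t - 1)) * X ^ t +
      ∑ i ∈ Finset.Icc 1 k,
        C (((q : ℚ) - 1) * (q : ℚ) ^ (2 * i + 1)) * X ^ (i + 2) * aP q k (ℓ + 1) i t := by
  rw [aP]; rw [if_neg (fun h => ht1 h.2), if_pos rfl]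

lemma aP_step_eq (q k ℓ s t : ℕ) (hs1 : s ≠ 1) (hst : s = t) :
    aP q k (ℓ + 2) s t = -C ((q : ℚ) - 1) * X + C (q : ℚ) * X ^ 2 * aP q k (ℓ + 1) (s - 1) t := by
  rw [aP]; rw [if_neg (fun h => hs1 h.1), if_neg hs1, if_pos hst]

lemma aP_step_ne (q k ℓ s t : ℕ) (hs1 : s ≠ 1) (hst : s ≠ t) :
    aP q k (ℓ + 2) s t = C (q : ℚ) * X ^ 2 * aP q k (ℓ + 1) (s - 1) t := by
  rw [aP]; rw [if_neg (fun h => hs1 h.1), if_neg hs1, if_neg hst]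

/-! ### Stabilization -/

lemma aP_diff_dvd (q k : ℕ) : ∀ ℓ, 1 ≤ ℓ → ∀ s t, 1 ≤ s → 1 ≤ t →
    X ^ (ℓ + 1) ∣ aP q k (ℓ + 1) s t - aP q k ℓ s t := by
  intro ℓ hℓ
  induction ℓ, hℓ using Nat.le_induction with
  | base =>
    intro s t hs ht
    show X ^ 2 ∣ aP q k (0 + 2) s t - aP q k 1 s t
    rcases eq_or_ne s 1 with rfl | hs1
    · rcases eq_or_ne t 1 with rfl | ht1
      · rw [aP_step_one_one, aP_one_one, add_sub_cancel_left]
        exact Finset.dvd_sum fun i hi =>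
          ⟨C (((q:ℚ)-1) * (q:ℚ)^(2*i+1)) * X ^ i * aP q k (0+1) i 1, by ring⟩
      · rw [aP_step_one q k 0 t ht1, aP_one_ne q k 1 t (fun h => ht1 h.symm), sub_zero]
        refine dvd_add ?_ (Finset.dvd_sum fun i hi =>
          ⟨C (((q:ℚ)-1) * (q:ℚ)^(2*i+1)) * X ^ i * aP q k (0+1) i t, by ring⟩)
        obtain ⟨u, rfl⟩ : ∃ u, t = u + 2 := ⟨t - 2, by omega⟩
        exact ⟨-C (((q:ℚ)-1) * (q:ℚ)^(2*(u+2)-1)) * X ^ u, by ring⟩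
    · rcases eq_or_ne s t with h | h
      · rw [aP_step_eq q k 0 s t hs1 h, aP_one_eq q k s t hs1 h, add_sub_cancel_left]
        exact (dvd_mul_left (X^2) (C (q:ℚ))).mul_right _
      · rw [aP_step_ne q k 0 s t hs1 h, aP_one_ne q k s t h, sub_zero]
        exact (dvd_mul_left (X^2) (C (q:ℚ))).mul_right _
  | succ m hm ih =>
    intro s t hs ht
    obtain ⟨n, rfl⟩ : ∃ n, m = n + 1 := ⟨m - 1, by omega⟩
    show X ^ (n + 3) ∣ aP q k (n + 1 + 2) s t - aP q k (n + 2) s t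
    rcases eq_or_ne s 1 with rfl | hs1
    · rcases eq_or_ne t 1 with rfl | ht1
      · rw [aP_step_one_one, aP_step_one_one, add_sub_add_left_eq_sub,
          ← Finset.sum_sub_distrib]
        refine Finset.dvd_sum fun i hi => ?_
        obtain ⟨c, hc⟩ := ih i 1 (by simp at hi; omega) le_rfl
        exact ⟨C (((q:ℚ)-1) * (q:ℚ)^(2*i+1)) * X ^ (i+1) * c,
          by rw [← mul_sub, hc]; ring⟩
      · rw [aP_step_one q k (n+1) t ht1, aP_step_one q k n t ht1, add_sub_add_left_eq_sub,
          ← Finset.sum_sub_distrib]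
        refine Finset.dvd_sum fun i hi => ?_
        obtain ⟨c, hc⟩ := ih i t (by simp at hi; omega) ht
        exact ⟨C (((q:ℚ)-1) * (q:ℚ)^(2*i+1)) * X ^ (i+1) * c,
          by rw [← mul_sub, hc]; ring⟩
    · rcases eq_or_ne s t with h | h
      · rw [aP_step_eq q k (n+1) s t hs1 h, aP_step_eq q k n s t hs1 h,
          add_sub_add_left_eq_sub, ← mul_sub]
        obtain ⟨c, hc⟩ := ih (s-1) t (by omega) ht
        exact ⟨C (q:ℚ) * X * c, by rw [hc]; ring⟩
      · rw [aP_step_ne q k (n+1) s t hs1 h, aP_step_ne q k n s t hs1 h, ← mul_sub]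
        obtain ⟨c, hc⟩ := ih (s-1) t (by omega) ht
        exact ⟨C (q:ℚ) * X * c, by rw [hc]; ring⟩

lemma aP_coeff_stable (q k s t : ℕ) (hs : 1 ≤ s) (ht : 1 ≤ t) (d ℓ : ℕ)
    (hℓ1 : 1 ≤ ℓ) (hdℓ : d ≤ ℓ) :
    ∀ m, ℓ ≤ m → (aP q k m s t).coeff d = (aP q k ℓ s t).coeff d := by
  intro m hm
  induction m, hm using Nat.le_induction with
  | base => rfl
  | succ m hm ih =>
    rw [← ih]
    have h := aP_diff_dvd q k m (by omega) s t hs ht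
    have h2 := (Polynomial.X_pow_dvd_iff.mp h) d (by omega)
    rw [Polynomial.coeff_sub, sub_eq_zero] at h2
    exact h2

noncomputable def aLim (q k s t : ℕ) : PowerSeries ℚ :=
  PowerSeries.mk fun d => (aP q k (d + 1) s t).coeff d

lemma coeff_CXsq_mul_poly (a : ℚ) (f : ℚ[X]) (d : ℕ) :
    (C a * X ^ 2 * f).coeff d = if 2 ≤ d then a * f.coeff (d - 2) else 0 := by
  rw [show C a * X ^ 2 * f = (C a * f) * X ^ 2 by ring, Polynomial.coeff_mul_X_pow']
  split_ifs with h <;> simp [Polynomial.coeff_C_mul]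

lemma coeff_CXsq_mul_ps (a : ℚ) (f : PowerSeries ℚ) (d : ℕ) :
    PowerSeries.coeff d (PowerSeries.C a * PowerSeries.X ^ 2 * f) =
      if 2 ≤ d then a * PowerSeries.coeff (d - 2) f else 0 := by
  rw [show PowerSeries.C a * PowerSeries.X ^ 2 * f
      = (PowerSeries.C a * f) * PowerSeries.X ^ 2 by ring,
    PowerSeries.coeff_mul_X_pow']
  split_ifs with h <;> simp [PowerSeries.coeff_C_mul]

lemma coeff_lin_ps (a : ℚ) (d : ℕ) :
    PowerSeries.coeff d (-(PowerSeries.C a) * PowerSeries.X)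
      = if d = 1 then -a else 0 := by
  rw [neg_mul, map_neg, PowerSeries.coeff_C_mul, PowerSeries.coeff_X]
  by_cases h : d = 1 <;> simp [h]

lemma coeff_lin_poly (a : ℚ) (d : ℕ) :
    (-C a * X : ℚ[X]).coeff d = if d = 1 then -a else 0 := by
  rw [neg_mul, Polynomial.coeff_neg, Polynomial.coeff_C_mul, Polynomial.coeff_X]
  rcases eq_or_ne d 1 with rfl | h
  · simp
  · simp [h, Ne.symm h]

lemma aLim_rec (q k s t : ℕ) (hs : 2 ≤ s) (ht : 1 ≤ t) :
    aLim q k s t = (if s = t then -(PowerSeries.C ((q:ℚ) - 1)) * PowerSeries.X else 0)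
      + PowerSeries.C (q:ℚ) * PowerSeries.X ^ 2 * aLim q k (s - 1) t := by
  have hs1 : s ≠ 1 := by omega
  ext d
  rw [map_add, coeff_CXsq_mul_ps, aLim, PowerSeries.coeff_mk]
  have hlin : ∀ d : ℕ, PowerSeries.coeff d
      ((if s = t then -(PowerSeries.C ((q:ℚ) - 1)) * PowerSeries.X else 0) : PowerSeries ℚ)
      = if s = t then (if d = 1 then -((q:ℚ) - 1) else 0) else 0 := by
    intro d
    rcases eq_or_ne s t with h | h
    · rw [if_pos h, if_pos h, coeff_lin_ps]
    · rw [if_neg h, if_neg h, map_zero]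
  rw [hlin]
  match d with
  | 0 =>
    rw [if_neg (by omega : ¬ 2 ≤ 0), add_zero]
    rcases eq_or_ne s t with h | h
    · rw [if_pos h, if_neg (by omega : ¬ (0 = 1)), aP_one_eq q k s t hs1 h, coeff_lin_poly,
        if_neg (by omega : ¬ (0 = 1))]
    · rw [if_neg h, aP_one_ne q k s t h, Polynomial.coeff_zero]
  | 1 =>
    rw [if_neg (by omega : ¬ 2 ≤ 1), add_zero]
    rcases eq_or_ne s t with h | h
    · rw [if_pos h, if_pos rfl, aP_step_eq q k 0 s t hs1 h, Polynomial.coeff_add,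
        coeff_lin_poly, if_pos rfl, coeff_CXsq_mul_poly, if_neg (by omega : ¬ 2 ≤ 1), add_zero]
    · rw [if_neg h, aP_step_ne q k 0 s t hs1 h, coeff_CXsq_mul_poly,
        if_neg (by omega : ¬ 2 ≤ 1)]
  | (e + 2) =>
    rw [if_pos (by omega : 2 ≤ e + 2)]
    have hL : PowerSeries.coeff (e + 2 - 2) (aLim q k (s-1) t)
        = (aP q k (e + 1) (s - 1) t).coeff e := by
      simp [aLim, PowerSeries.coeff_mk]
    rw [hL]
    have hst : (aP q k (e + 1 + 1) (s - 1) t).coeff e = (aP q k (e + 1) (s - 1) t).coeff e :=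
      aP_coeff_stable q k (s-1) t (by omega) ht e (e+1) (by omega) (by omega) (e+2) (by omega)
    rcases eq_or_ne s t with h | h
    · rw [if_pos h, if_neg (by omega : ¬ (e + 2 = 1)), aP_step_eq q k (e+1) s t hs1 h,
        Polynomial.coeff_add, coeff_lin_poly, if_neg (by omega : ¬ (e + 2 = 1)),
        coeff_CXsq_mul_poly, if_pos (by omega : 2 ≤ e + 2)]
      rw [show e + 2 - 2 = e from rfl, hst, zero_add]
    · rw [if_neg h, aP_step_ne q k (e+1) s t hs1 h, coeff_CXsq_mul_poly,
        if_pos (by omega : 2 ≤ e + 2)]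
      rw [show e + 2 - 2 = e from rfl, hst, zero_add]

end Aux

open PowerSeries in
/-- For all `1 ≤ s,t ≤ k` and each degree `d`, the `u^d`-coefficient of `a_{k,(s,t),ℓ}(u)`
is eventually constant as `ℓ → ∞`; the limit power series `α_{k,(s,t)}(u)` satisfy, for
`s ≥ 2`:  `α_{k,(s,t)} = qu²·α_{k,(s−1,t)}` if `s ≠ t`, and
`α_{k,(s,t)} = −(q−1)u + qu²·α_{k,(s−1,t)}` if `s = t`. -/
theorem aP_limits_recurrence (q k : ℕ) (hq : 2 ≤ q) (hk : 1 ≤ k) :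
    ∃ α : ℕ → ℕ → PowerSeries ℚ,
      (∀ s t : ℕ, 1 ≤ s → s ≤ k → 1 ≤ t → t ≤ k →
        ∀ d : ℕ, ∃ L : ℕ, ∀ ℓ : ℕ, L ≤ ℓ → 1 ≤ ℓ →
          (aP q k ℓ s t).coeff d = PowerSeries.coeff d (α s t)) ∧
      (∀ s t : ℕ, 2 ≤ s → s ≤ k → 1 ≤ t → t ≤ k →
        (s ≠ t → α s t = C (q : ℚ) * X ^ 2 * α (s - 1) t) ∧
        (s = t → α s t = -(C ((q : ℚ) - 1)) * X + C (q : ℚ) * X ^ 2 * α (s - 1) t)) := by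
  refine ⟨aLim q k, ?_, ?_⟩
  · intro s t hs hsk ht htk d
    refine ⟨d + 1, fun ℓ hL h1 => ?_⟩
    rw [aLim, PowerSeries.coeff_mk]
    exact aP_coeff_stable q k s t hs ht d (d+1) (by omega) (by omega) ℓ hL
  · intro s t hs hsk ht htk
    constructor
    · intro h
      have := aLim_rec q k s t hs ht
      rw [if_neg h, zero_add] at this
      exact this
    · intro h
      have := aLim_rec q k s t hs ht
      rw [if_pos h] at this
      exact this
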